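/- Let N ≥ 3, 2 < p < 2 + 4/N < q ≤ 2*, 2 < r < 2*, and let a, b, c, d > 0. Then the function l(t) = a t² − b t^{γ_r} − c t^{γ_p} − d t^{γ_q}, defined for t ∈ (0,∞), has at most two critical points; that is, the set {t > 0 : l'(t) = 0} has at most two elements. -/

import Mathlib

open Real

/-- `γ_s = N(s-2)/2`. -/
noncomputable def gam (N : ℕ) (s : ℝ) : ℝ := (N : ℝ) * (s - 2) / 2

/-- The critical Sobolev exponent `2* = 2N/(N-2)`. -/
noncomputable def twoStar (N : ℕ) : ℝ := 2 * (N : ℝ) / ((N : ℝ) - 2)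

/-- Strict decrease of `A t^er + P t^ep - Q t^eq` under sign conditions. -/
lemma aux_anti (A P Q er ep eq : ℝ) (hP : 0 < P) (hQ : 0 < Q)
    (hA : (A ≤ 0 ∧ 0 ≤ er) ∨ (0 ≤ A ∧ er ≤ 0)) (hep : ep ≤ 0) (heq : 0 ≤ eq)
    (hst : ep < 0 ∨ 0 < eq) (s u : ℝ) (hs : 0 < s) (hsu : s < u) :
    A * u ^ er + P * u ^ ep - Q * u ^ eq < A * s ^ er + P * s ^ ep - Q * s ^ eq := by
  have h1 : A * u ^ er ≤ A * s ^ er := by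
    rcases hA with ⟨hA, her⟩ | ⟨hA, her⟩
    · exact mul_le_mul_of_nonpos_left (Real.rpow_le_rpow hs.le hsu.le her) hA
    · exact mul_le_mul_of_nonneg_left (Real.rpow_le_rpow_of_nonpos hs hsu.le her) hA
  have h2 : P * u ^ ep ≤ P * s ^ ep :=
    mul_le_mul_of_nonneg_left (Real.rpow_le_rpow_of_nonpos hs hsu.le hep) hP.le
  have h3 : Q * s ^ eq ≤ Q * u ^ eq :=
    mul_le_mul_of_nonneg_left (Real.rpow_le_rpow hs.le hsu.le heq) hQ.le
  rcases hst with h | h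
  · have h2' : P * u ^ ep < P * s ^ ep :=
      mul_lt_mul_of_pos_left (Real.rpow_lt_rpow_of_neg hs hsu h) hP
    linarith
  · have h3' : Q * s ^ eq < Q * u ^ eq :=
      mul_lt_mul_of_pos_left (Real.rpow_lt_rpow hs.le hsu h) hQ
    linarith

theorem stmt_4 (N : ℕ) (hN : 3 ≤ N) (p q r : ℝ)
    (hp : 2 < p) (hpN : p < 2 + 4 / (N : ℝ)) (hNq : 2 + 4 / (N : ℝ) < q)
    (hq : q ≤ twoStar N) (hr : 2 < r) (hr2 : r < twoStar N) (a b c d : ℝ)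
    (ha : 0 < a) (hb : 0 < b) (hc : 0 < c) (hd : 0 < d) :
    {t : ℝ | 0 < t ∧
      deriv (fun t : ℝ => a * t ^ 2 - b * t ^ (gam N r)
        - c * t ^ (gam N p) - d * t ^ (gam N q)) t = 0}.encard ≤ 2 := by
  set γr := gam N r with hγr
  set γp := gam N p with hγp
  set γq := gam N q with hγq
  have hNpos : (0 : ℝ) < (N : ℝ) := by positivity
  have hN3 : (3 : ℝ) ≤ (N : ℝ) := by exact_mod_cast hN
  have hγp0 : 0 < γp := by
    rw [hγp, gam]
    have : 0 < (N : ℝ) * (p - 2) := mul_pos hNpos (by linarith)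
    linarith
  have hγp2 : γp < 2 := by
    rw [hγp, gam]
    have h4 : (N : ℝ) * (p - 2) < 4 := by
      have h : p - 2 < 4 / (N : ℝ) := by linarith
      calc (N : ℝ) * (p - 2) < (N : ℝ) * (4 / (N : ℝ)) := mul_lt_mul_of_pos_left h hNpos
        _ = 4 := by field_simp
    linarith
  have hγq2 : 2 < γq := by
    rw [hγq, gam]
    have h4 : 4 < (N : ℝ) * (q - 2) := by
      have h : 4 / (N : ℝ) < q - 2 := by linarith
      calc (4 : ℝ) = (N : ℝ) * (4 / (N : ℝ)) := by field_simp
        _ < (N : ℝ) * (q - 2) := by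
          exact mul_lt_mul_of_pos_left h hNpos
    linarith
  have hγr0 : 0 < γr := by
    rw [hγr, gam]
    have : 0 < (N : ℝ) * (r - 2) := mul_pos hNpos (by linarith)
    linarith
  -- the reduced function g and its derivative
  set g : ℝ → ℝ := fun t => 2 * a - b * γr * t ^ (γr - 2)
      - c * γp * t ^ (γp - 2) - d * γq * t ^ (γq - 2) with hg
  set A : ℝ := -(b * γr * (γr - 2)) with hA
  set P : ℝ := -(c * γp * (γp - 2)) with hP
  set Q : ℝ := d * γq * (γq - 2) with hQ
  have hPpos : 0 < P := by
    rw [hP]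
    nlinarith [mul_pos (mul_pos hc hγp0) (show (0:ℝ) < 2 - γp by linarith)]
  have hQpos : 0 < Q := by
    rw [hQ]
    nlinarith [mul_pos (mul_pos hd (show (0:ℝ) < γq by linarith)) (show (0:ℝ) < γq - 2 by linarith)]
  set G' : ℝ → ℝ := fun t => A * t ^ (γr - 3) + P * t ^ (γp - 3) - Q * t ^ (γq - 3)
    with hG'
  -- derivative of the original function
  have hderiv : ∀ t : ℝ, 0 < t →
      deriv (fun t : ℝ => a * t ^ 2 - b * t ^ γr - c * t ^ γp - d * t ^ γq) t
        = t * g t := by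
    intro t ht
    have h1 : HasDerivAt (fun x : ℝ => a * x ^ 2) (a * (2 * t ^ 1)) t := by
      simpa using (hasDerivAt_pow 2 t).const_mul a
    have h2 : HasDerivAt (fun x : ℝ => b * x ^ γr) (b * (γr * t ^ (γr - 1))) t :=
      (Real.hasDerivAt_rpow_const (Or.inl ht.ne')).const_mul b
    have h3 : HasDerivAt (fun x : ℝ => c * x ^ γp) (c * (γp * t ^ (γp - 1))) t :=
      (Real.hasDerivAt_rpow_const (Or.inl ht.ne')).const_mul c
    have h4 : HasDerivAt (fun x : ℝ => d * x ^ γq) (d * (γq * t ^ (γq - 1))) t :=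
      (Real.hasDerivAt_rpow_const (Or.inl ht.ne')).const_mul d
    have h : HasDerivAt (fun x : ℝ => a * x ^ 2 - b * x ^ γr - c * x ^ γp - d * x ^ γq) _ t :=
      ((h1.sub h2).sub h3).sub h4
    rw [h.deriv]
    have e : ∀ γ : ℝ, t ^ (γ - 1) = t ^ (γ - 2) * t := by
      intro γ
      rw [show γ - 1 = (γ - 2) + 1 by ring, Real.rpow_add ht, Real.rpow_one]
    rw [e γr, e γp, e γq, hg]
    ring
  -- derivative of g
  have hgderiv : ∀ t : ℝ, 0 < t → HasDerivAt g (G' t) t := by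
    intro t ht
    have h2 : HasDerivAt (fun x : ℝ => b * γr * x ^ (γr - 2))
        (b * γr * ((γr - 2) * t ^ (γr - 2 - 1))) t :=
      (Real.hasDerivAt_rpow_const (Or.inl ht.ne')).const_mul (b * γr)
    have h3 : HasDerivAt (fun x : ℝ => c * γp * x ^ (γp - 2))
        (c * γp * ((γp - 2) * t ^ (γp - 2 - 1))) t :=
      (Real.hasDerivAt_rpow_const (Or.inl ht.ne')).const_mul (c * γp)
    have h4 : HasDerivAt (fun x : ℝ => d * γq * x ^ (γq - 2))
        (d * γq * ((γq - 2) * t ^ (γq - 2 - 1))) t :=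
      (Real.hasDerivAt_rpow_const (Or.inl ht.ne')).const_mul (d * γq)
    have h : HasDerivAt (fun x : ℝ => 2 * a - b * γr * x ^ (γr - 2) - c * γp * x ^ (γp - 2)
        - d * γq * x ^ (γq - 2)) _ t :=
      (((hasDerivAt_const t (2 * a)).sub h2).sub h3).sub h4
    convert h using 1
    rw [hG', show γr - 2 - 1 = γr - 3 by ring, show γp - 2 - 1 = γp - 3 by ring,
      show γq - 2 - 1 = γq - 3 by ring, hA, hP, hQ]
    ring
  -- choice of normalizing exponent
  set γ0 : ℝ := if γr ≤ 2 then max γr γp else min γr γq with hγ0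
  -- the normalized function ψ
  set ψ : ℝ → ℝ := fun t =>
    A * t ^ (γr - γ0) + P * t ^ (γp - γ0) - Q * t ^ (γq - γ0) with hψ
  have hψG' : ∀ t : ℝ, 0 < t → ψ t = G' t * t ^ ((3 : ℝ) - γ0) := by
    intro t ht
    have e : ∀ γ : ℝ, t ^ (γ - 3) * t ^ ((3 : ℝ) - γ0) = t ^ (γ - γ0) := by
      intro γ
      rw [← Real.rpow_add ht, show γ - 3 + (3 - γ0) = γ - γ0 by ring]
    rw [hψ, hG']
    simp only
    rw [← e γr, ← e γp, ← e γq]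
    ring
  -- ψ is strictly decreasing
  have hψanti : ∀ s u : ℝ, 0 < s → s < u → ψ u < ψ s := by
    intro s u hs hsu
    rw [hψ]
    by_cases hcase : γr ≤ 2
    · have hγ0eq : γ0 = max γr γp := by rw [hγ0, if_pos hcase]
      have h1 : γ0 ≤ 2 := by rw [hγ0eq]; exact max_le hcase hγp2.le
      refine aux_anti A P Q _ _ _ hPpos hQpos (Or.inr ⟨?_, ?_⟩) ?_ ?_ (Or.inr ?_)
        s u hs hsu
      · rw [hA]
        nlinarith [mul_nonneg (mul_nonneg hb.le hγr0.le) (show (0:ℝ) ≤ 2 - γr by linarith)]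
      · rw [hγ0eq]; simp [le_max_left]
      · rw [hγ0eq]; simp [le_max_right]
      · linarith
      · linarith
    · push_neg at hcase
      have hγ0eq : γ0 = min γr γq := by rw [hγ0, if_neg (not_le.2 hcase)]
      have h1 : 2 < γ0 := by rw [hγ0eq]; exact lt_min hcase hγq2
      refine aux_anti A P Q _ _ _ hPpos hQpos (Or.inl ⟨?_, ?_⟩) ?_ ?_ (Or.inl ?_)
        s u hs hsu
      · rw [hA]
        nlinarith [mul_nonneg (mul_nonneg hb.le hγr0.le) (show (0:ℝ) ≤ γr - 2 by linarith)]
      · rw [hγ0eq]; simp [min_le_left]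
      · linarith
      · rw [hγ0eq]; simp [min_le_right]
      · linarith
  -- g has at most two zeros
  have key : ∀ t₁ t₂ t₃ : ℝ, 0 < t₁ → t₁ < t₂ → t₂ < t₃ →
      g t₁ = 0 → g t₂ = 0 → g t₃ = 0 → False := by
    intro t₁ t₂ t₃ ht₁ h12 h23 hz1 hz2 hz3
    have hcont : ∀ x y : ℝ, 0 < x → ContinuousOn g (Set.Icc x y) := by
      intro x y hx
      intro z hz
      have hzpos : 0 < z := lt_of_lt_of_le hx hz.1
      have : ContinuousAt g z := by
        apply ContinuousAt.sub
        apply ContinuousAt.sub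
        apply ContinuousAt.sub
        · exact continuousAt_const
        · exact (Real.continuousAt_rpow_const z _ (Or.inl hzpos.ne')).const_mul _
        · exact (Real.continuousAt_rpow_const z _ (Or.inl hzpos.ne')).const_mul _
        · exact (Real.continuousAt_rpow_const z _ (Or.inl hzpos.ne')).const_mul _
      exact this.continuousWithinAt
    obtain ⟨s₁, hs₁, hGs₁⟩ := exists_hasDerivAt_eq_zero h12 (hcont t₁ t₂ ht₁)
      (hz1.trans hz2.symm)
      (fun x hx => hgderiv x (lt_trans ht₁ hx.1))
    have ht₂ : 0 < t₂ := lt_trans ht₁ h12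
    obtain ⟨s₂, hs₂, hGs₂⟩ := exists_hasDerivAt_eq_zero h23 (hcont t₂ t₃ ht₂)
      (hz2.trans hz3.symm)
      (fun x hx => hgderiv x (lt_trans ht₂ hx.1))
    have hs₁pos : 0 < s₁ := lt_trans ht₁ hs₁.1
    have hs₁s₂ : s₁ < s₂ := lt_trans hs₁.2 hs₂.1
    have hψ1 : ψ s₁ = 0 := by rw [hψG' s₁ hs₁pos, hGs₁, zero_mul]
    have hψ2 : ψ s₂ = 0 := by rw [hψG' s₂ (lt_trans hs₁pos hs₁s₂), hGs₂, zero_mul]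
    have := hψanti s₁ s₂ hs₁pos hs₁s₂
    rw [hψ1, hψ2] at this
    exact lt_irrefl 0 this
  -- reduce the set to zeros of g
  have hSeq : {t : ℝ | 0 < t ∧
      deriv (fun t : ℝ => a * t ^ 2 - b * t ^ γr - c * t ^ γp - d * t ^ γq) t = 0}
      ⊆ {t : ℝ | 0 < t ∧ g t = 0} := by
    intro t ⟨ht, hdt⟩
    refine ⟨ht, ?_⟩
    rw [hderiv t ht] at hdt
    rcases mul_eq_zero.1 hdt with h | h
    · exact absurd h ht.ne'
    · exact h
  -- conclude the cardinality bound
  by_contra hcon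
  push_neg at hcon
  set S := {t : ℝ | 0 < t ∧
      deriv (fun t : ℝ => a * t ^ 2 - b * t ^ γr - c * t ^ γp - d * t ^ γq) t = 0}
    with hS
  obtain ⟨x, y, hx, hy, hxy⟩ := Set.one_lt_encard_iff.1 (lt_trans (show (1:ℕ∞) < 2 by norm_num) hcon)
  have hpair : ({x, y} : Set ℝ).encard = 2 := Set.encard_pair hxy
  have hdiff : 0 < (S \ {x, y}).encard := by
    have := Set.tsub_encard_le_encard_diff S {x, y}
    rw [hpair] at this
    refine lt_of_lt_of_le ?_ this
    rw [pos_iff_ne_zero]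
    intro h0
    rw [tsub_eq_zero_iff_le] at h0
    exact absurd h0 (not_le.2 hcon)
  obtain ⟨z, hz⟩ := Set.encard_pos.1 hdiff
  have hzx : z ≠ x := fun h => hz.2 (by simp [h])
  have hzy : z ≠ y := fun h => hz.2 (by simp [h])
  have hzS : z ∈ S := hz.1
  -- x, y, z are three distinct zeros of g with positive arguments
  have hx' := hSeq hx
  have hy' := hSeq hy
  have hz' := hSeq hzS
  -- order them
  rcases lt_trichotomy x y with h1 | h1 | h1
  · rcases lt_trichotomy z x with h2 | h2 | h2
    · exact key z x y hz'.1 h2 h1 hz'.2 hx'.2 hy'.2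
    · exact hzx h2
    · rcases lt_trichotomy z y with h3 | h3 | h3
      · exact key x z y hx'.1 h2 h3 hx'.2 hz'.2 hy'.2
      · exact hzy h3
      · exact key x y z hx'.1 h1 h3 hx'.2 hy'.2 hz'.2
  · exact hxy h1
  · rcases lt_trichotomy z y with h2 | h2 | h2
    · exact key z y x hz'.1 h2 h1 hz'.2 hy'.2 hx'.2
    · exact hzy h2
    · rcases lt_trichotomy z x with h3 | h3 | h3
      · exact key y z x hy'.1 h2 h3 hy'.2 hz'.2 hx'.2
      · exact hzx h3
      · exact key y x z hy'.1 h1 h3 hy'.2 hx'.2 hz'.2
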